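/- Fix an integer m ≥ 1, R₊ > 0, and R₊ < R₁ ≤ R₂ < ∞. Let σ : [R₊,∞) → ℝ be continuous with support contained in [R₁, R₂]. Then there exists a solution ψ of ψ''(R) + ψ'(R)/R − m²ψ(R)/R² = σ(R) on [R₊,∞) that vanishes identically on [R₊, R₁] and on [R₂, ∞) if and only if ∫_{R₁}^{R₂} R^{1−m} σ(R) dR = 0 and ∫_{R₁}^{R₂} R^{1+m} σ(R) dR = 0. -/

import Mathlib

open MeasureTheory intervalIntegral


private lemma cont_mul_zpow_aux {σ : ℝ → ℝ} {R₁ : ℝ} (hR₁ : 0 < R₁)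
    (hσ : Continuous σ) (hv : ∀ t, t < R₁ → σ t = 0) (k : ℤ) :
    Continuous fun s : ℝ => s ^ k * σ s := by
  rw [continuous_iff_continuousAt]
  intro x
  by_cases hx : x = 0
  · subst hx
    refine Filter.EventuallyEq.continuousAt (y := 0) ?_
    filter_upwards [Iio_mem_nhds hR₁] with s hs
    simp [hv s hs]
  · exact (continuousAt_zpow₀ x k (Or.inl hx)).mul hσ.continuousAt

private lemma ftc_aux {σ : ℝ → ℝ} {R₁ : ℝ} (hR₁ : 0 < R₁)
    (hσ : Continuous σ) (hv : ∀ t, t < R₁ → σ t = 0) (k : ℤ) (x : ℝ) :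
    HasDerivAt (fun u => ∫ s in R₁..u, s ^ k * σ s) (x ^ k * σ x) x := by
  have hc := cont_mul_zpow_aux hR₁ hσ hv k
  exact integral_hasDerivAt_right (hc.intervalIntegrable _ _)
    (hc.stronglyMeasurableAtFilter _ _) hc.continuousAt

example (R₁ : ℝ) : ∀ᵐ s : ℝ, s ≠ R₁ := by
  rw [MeasureTheory.ae_iff]
  simp [not_not, Set.setOf_eq_eq_singleton]

private lemma integral_zero_left_aux {R₁ : ℝ} (g : ℝ → ℝ)
    (hg : ∀ s, s < R₁ → g s = 0) (x : ℝ) (hx : x ≤ R₁) :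
    (∫ s in R₁..x, g s) = 0 := by
  rw [intervalIntegral.integral_congr_ae (g := fun _ => (0:ℝ)),
    intervalIntegral.integral_zero]
  have hne : ∀ᵐ s : ℝ, s ≠ R₁ := by
    rw [MeasureTheory.ae_iff]
    simp [not_not, Set.setOf_eq_eq_singleton]
  filter_upwards [hne] with s hs hmem
  rw [Set.uIoc_comm, Set.uIoc_of_le hx] at hmem
  exact hg s (lt_of_le_of_ne hmem.2 hs)

private lemma integral_cutoff_right_aux {R₁ R₂ : ℝ} (g : ℝ → ℝ) (hgc : Continuous g)
    (hg : ∀ s, R₂ < s → g s = 0) (x : ℝ) (hx : R₂ ≤ x) :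
    (∫ s in R₁..x, g s) = ∫ s in R₁..R₂, g s := by
  rw [← intervalIntegral.integral_add_adjacent_intervals
    (hgc.intervalIntegrable R₁ R₂) (hgc.intervalIntegrable R₂ x)]
  have h0 : (∫ s in R₂..x, g s) = 0 := by
    rw [intervalIntegral.integral_congr_ae (g := fun _ => (0:ℝ)),
      intervalIntegral.integral_zero]
    filter_upwards with s hmem
    rw [Set.uIoc_of_le hx] at hmem
    exact hg s hmem.1
  rw [h0, add_zero]

/-- For a continuous source σ supported in [R₁,R₂] ⊂ (R₊,∞), the equation
ψ'' + ψ'/R − m²ψ/R² = σ admits a solution on [R₊,∞) vanishing identically on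
[R₊,R₁] and on [R₂,∞) iff ∫ R^{1−m} σ = 0 and ∫ R^{1+m} σ = 0. -/
theorem compactly_supported_solution_iff_integral_conditions
    (m : ℕ) (hm : 1 ≤ m) (Rp R₁ R₂ : ℝ)
    (hRp : 0 < Rp) (h₁ : Rp < R₁) (h₁₂ : R₁ ≤ R₂)
    (σ : ℝ → ℝ) (hσ : Continuous σ)
    (hsupp : ∀ t : ℝ, σ t ≠ 0 → t ∈ Set.Icc R₁ R₂) :
    (∃ ψ ψ' : ℝ → ℝ,
        (∀ R, Rp ≤ R → HasDerivWithinAt ψ (ψ' R) (Set.Ici Rp) R) ∧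
        (∀ R, Rp ≤ R → HasDerivWithinAt ψ'
          (σ R - ψ' R / R + (m : ℝ) ^ 2 * ψ R / R ^ 2) (Set.Ici Rp) R) ∧
        (∀ R ∈ Set.Icc Rp R₁, ψ R = 0) ∧
        (∀ R, R₂ ≤ R → ψ R = 0))
      ↔ ((∫ R in R₁..R₂, R ^ ((1 : ℤ) - (m : ℤ)) * σ R) = 0 ∧
         (∫ R in R₁..R₂, R ^ ((1 : ℤ) + (m : ℤ)) * σ R) = 0) := by
  have hR₁pos : 0 < R₁ := hRp.trans h₁
  have hv : ∀ t, t < R₁ → σ t = 0 := by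
    intro t ht; by_contra h; exact absurd (hsupp t h).1 (not_le.mpr ht)
  have hv2 : ∀ t, R₂ < t → σ t = 0 := by
    intro t ht; by_contra h; exact absurd (hsupp t h).2 (not_le.mpr ht)
  constructor
  · rintro ⟨ψ, ψ', hψ, hψ', hz1, hz2⟩
    have hψR₁ : ψ R₁ = 0 := hz1 R₁ ⟨h₁.le, le_refl _⟩
    have hψR₂ : ψ R₂ = 0 := hz2 R₂ (le_refl _)
    have hψ'R₁ : ψ' R₁ = 0 := by
      have hd1 : HasDerivWithinAt ψ (ψ' R₁) (Set.Icc Rp R₁) R₁ :=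
        (hψ R₁ h₁.le).mono Set.Icc_subset_Ici_self
      have hd0 : HasDerivWithinAt ψ 0 (Set.Icc Rp R₁) R₁ :=
        (hasDerivWithinAt_const R₁ _ (0:ℝ)).congr (fun y hy => hz1 y hy) hψR₁
      exact ((uniqueDiffOn_Icc h₁) R₁ ⟨h₁.le, le_refl _⟩).eq_deriv _ hd1 hd0
    have hψ'R₂ : ψ' R₂ = 0 := by
      have hd1 : HasDerivWithinAt ψ (ψ' R₂) (Set.Ici R₂) R₂ :=
        (hψ R₂ (h₁.le.trans h₁₂)).mono (Set.Ici_subset_Ici.mpr (h₁.le.trans h₁₂))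
      have hd0 : HasDerivWithinAt ψ 0 (Set.Ici R₂) R₂ :=
        (hasDerivWithinAt_const R₂ _ (0:ℝ)).congr (fun y hy => hz2 y hy) hψR₂
      exact ((uniqueDiffOn_Ici R₂) R₂ Set.self_mem_Ici).eq_deriv _ hd1 hd0
    have key : ∀ k : ℤ, ((k:ℝ))^2 = ((m:ℝ))^2 →
        (∫ R in R₁..R₂, R ^ (k+1) * σ R) = 0 := by
      intro k hk
      set F : ℝ → ℝ := fun R => R ^ (k+1) * ψ' R - (k:ℝ) * R ^ k * ψ R with hF
      have hderiv : ∀ x ∈ Set.uIcc R₁ R₂, HasDerivAt F (x ^ (k+1) * σ x) x := by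
        intro x hx
        rw [Set.uIcc_of_le h₁₂] at hx
        have hxRp : Rp < x := h₁.trans_le hx.1
        have hx0 : x ≠ 0 := (hRp.trans hxRp).ne'
        have hmem : Set.Ici Rp ∈ nhds x := Ici_mem_nhds hxRp
        have h1 : HasDerivAt ψ (ψ' x) x := (hψ x hxRp.le).hasDerivAt hmem
        have h2 : HasDerivAt ψ' (σ x - ψ' x / x + (m:ℝ)^2 * ψ x / x^2) x :=
          (hψ' x hxRp.le).hasDerivAt hmem
        have h3 : HasDerivAt (fun y : ℝ => y ^ (k+1)) (((k:ℝ)+1) * x ^ k) x := by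
          have := hasDerivAt_zpow (k+1) x (Or.inl hx0)
          simpa [add_sub_cancel_right] using this
        have h4 : HasDerivAt (fun y : ℝ => (k:ℝ) * y ^ k) ((k:ℝ) * ((k:ℝ) * x ^ (k-1))) x :=
          (hasDerivAt_zpow k x (Or.inl hx0)).const_mul _
        have hD := (h3.mul h2).sub (h4.mul h1)
        refine hD.congr_deriv ?_
        have e1 : x ^ (k+1) = x ^ k * x := by rw [zpow_add_one₀ hx0]
        have e2 : x ^ (k-1) = x ^ k / x := by
          rw [zpow_sub₀ hx0, zpow_one]
        rw [e1, e2, ← hk]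
        field_simp
        ring
      have hcont : Continuous fun s : ℝ => s ^ (k+1) * σ s :=
        cont_mul_zpow_aux hR₁pos hσ hv _
      have hint := intervalIntegral.integral_eq_sub_of_hasDerivAt hderiv
        (hcont.intervalIntegrable _ _)
      rw [hint, hF]
      simp [hψR₁, hψR₂, hψ'R₁, hψ'R₂]
    constructor
    · have := key (-(m:ℤ)) (by push_cast; ring)
      have he : (-(m:ℤ)) + 1 = (1:ℤ) - m := by ring
      rwa [he] at this
    · have := key ((m:ℤ)) rfl
      have he : ((m:ℤ)) + 1 = (1:ℤ) + m := by ring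
      rwa [he] at this
  · rintro ⟨hI1, hI2⟩
    set g1 : ℝ → ℝ := fun s => s ^ ((1:ℤ) - m) * σ s with hg1def
    set g2 : ℝ → ℝ := fun s => s ^ ((1:ℤ) + m) * σ s with hg2def
    have hg1z : ∀ s, s < R₁ → g1 s = 0 := fun s hs => by simp [hg1def, hv s hs]
    have hg2z : ∀ s, s < R₁ → g2 s = 0 := fun s hs => by simp [hg2def, hv s hs]
    have hg1z2 : ∀ s, R₂ < s → g1 s = 0 := fun s hs => by simp [hg1def, hv2 s hs]
    have hg2z2 : ∀ s, R₂ < s → g2 s = 0 := fun s hs => by simp [hg2def, hv2 s hs]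
    have hg1c : Continuous g1 := cont_mul_zpow_aux hR₁pos hσ hv _
    have hg2c : Continuous g2 := cont_mul_zpow_aux hR₁pos hσ hv _
    set B : ℝ → ℝ := fun x => ∫ s in R₁..x, g1 s with hBdef
    set A : ℝ → ℝ := fun x => ∫ s in R₁..x, g2 s with hAdef
    have hB : ∀ x : ℝ, HasDerivAt B (g1 x) x := fun x => ftc_aux hR₁pos hσ hv _ x
    have hA : ∀ x : ℝ, HasDerivAt A (g2 x) x := fun x => ftc_aux hR₁pos hσ hv _ x
    have hBl : ∀ x ≤ R₁, B x = 0 := fun x hx => integral_zero_left_aux g1 hg1z x hx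
    have hAl : ∀ x ≤ R₁, A x = 0 := fun x hx => integral_zero_left_aux g2 hg2z x hx
    have hBr : ∀ x, R₂ ≤ x → B x = 0 := by
      intro x hx
      rw [hBdef]
      simp only
      rw [integral_cutoff_right_aux g1 hg1c hg1z2 x hx]
      exact hI1
    have hAr : ∀ x, R₂ ≤ x → A x = 0 := by
      intro x hx
      rw [hAdef]
      simp only
      rw [integral_cutoff_right_aux g2 hg2c hg2z2 x hx]
      exact hI2
    have hm0 : (m:ℝ) ≠ 0 := Nat.cast_ne_zero.mpr (by omega)
    refine ⟨fun x => (x ^ (m:ℤ) * B x - x ^ (-(m:ℤ)) * A x) / (2*m),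
        fun x => (x ^ ((m:ℤ)-1) * B x + x ^ (-(m:ℤ)-1) * A x) / 2, ?_, ?_, ?_, ?_⟩
    · intro x hx
      have hx0 : x ≠ 0 := (hRp.trans_le hx).ne'
      have ha : x ^ ((m:ℤ)) ≠ 0 := zpow_ne_zero _ hx0
      have d1 := (((hasDerivAt_zpow (m:ℤ) x (Or.inl hx0)).mul (hB x)).sub
        ((hasDerivAt_zpow (-(m:ℤ)) x (Or.inl hx0)).mul (hA x))).div_const (2*(m:ℝ))
      refine HasDerivAt.hasDerivWithinAt ?_
      refine d1.congr_deriv ?_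
      have E1 : x ^ ((1:ℤ)-(m:ℤ)) = x / x ^ (m:ℤ) := by rw [zpow_sub₀ hx0, zpow_one]
      have E2 : x ^ ((1:ℤ)+(m:ℤ)) = x * x ^ (m:ℤ) := by rw [zpow_add₀ hx0, zpow_one]
      have E3 : x ^ ((m:ℤ)-1) = x ^ (m:ℤ) / x := by rw [zpow_sub₀ hx0, zpow_one]
      have E4 : x ^ (-(m:ℤ)) = (x ^ (m:ℤ))⁻¹ := zpow_neg x (m:ℤ)
      have E5 : x ^ (-(m:ℤ)-1) = (x ^ (m:ℤ) * x)⁻¹ := by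
        rw [show -(m:ℤ)-1 = -((m:ℤ)+1) by ring, zpow_neg, zpow_add_one₀ hx0]
      simp only [hg1def, hg2def]
      rw [E1, E2, E3, E4, E5]
      push_cast
      field_simp
      ring
    · intro x hx
      have hx0 : x ≠ 0 := (hRp.trans_le hx).ne'
      have ha : x ^ ((m:ℤ)) ≠ 0 := zpow_ne_zero _ hx0
      have d2 := (((hasDerivAt_zpow ((m:ℤ)-1) x (Or.inl hx0)).mul (hB x)).add
        ((hasDerivAt_zpow (-(m:ℤ)-1) x (Or.inl hx0)).mul (hA x))).div_const (2:ℝ)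
      refine HasDerivAt.hasDerivWithinAt ?_
      refine d2.congr_deriv ?_
      have E1 : x ^ ((1:ℤ)-(m:ℤ)) = x / x ^ (m:ℤ) := by rw [zpow_sub₀ hx0, zpow_one]
      have E2 : x ^ ((1:ℤ)+(m:ℤ)) = x * x ^ (m:ℤ) := by rw [zpow_add₀ hx0, zpow_one]
      have E3 : x ^ ((m:ℤ)-1) = x ^ (m:ℤ) / x := by rw [zpow_sub₀ hx0, zpow_one]
      have E4 : x ^ (-(m:ℤ)) = (x ^ (m:ℤ))⁻¹ := zpow_neg x (m:ℤ)
      have E5 : x ^ (-(m:ℤ)-1) = (x ^ (m:ℤ) * x)⁻¹ := by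
        rw [show -(m:ℤ)-1 = -((m:ℤ)+1) by ring, zpow_neg, zpow_add_one₀ hx0]
      have E6 : x ^ ((m:ℤ)-1-1) = x ^ (m:ℤ) / (x*x) := by
        rw [show (m:ℤ)-1-1 = (m:ℤ)-2 by ring, zpow_sub₀ hx0,
          show (2:ℤ) = (1:ℤ)+1 by ring, zpow_add_one₀ hx0, zpow_one]
      have E7 : x ^ (-(m:ℤ)-1-1) = (x ^ (m:ℤ) * x * x)⁻¹ := by
        rw [show -(m:ℤ)-1-1 = -((m:ℤ)+1+1) by ring, zpow_neg, zpow_add_one₀ hx0,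
          zpow_add_one₀ hx0]
      simp only [hg1def, hg2def]
      rw [E1, E2, E3, E4, E5, E6, E7]
      push_cast
      field_simp
      ring
    · intro R hR
      simp only
      rw [hBl R hR.2, hAl R hR.2]
      ring
    · intro R hR
      simp only
      rw [hBr R hR, hAr R hR]
      ring
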